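/- Let G be a group of μ-good symmetries of a regular and G-regular discrete mechanical system, for some μ ∈ 𝔤* satisfying Ad*_g(μ) = μ for all g ∈ G. Then the level set 𝒥_μ := J_d⁻¹(μ) ⊂ Q × Q defines an affine discrete connection on π : Q → Q/G, with level map γ : Q → G determined by J_d(q, γ(q)·q) = μ; in particular γ is G-equivariant for the conjugation action. -/

import Mathlib

open scoped Manifold
open Function Module

lemma aux_dim_le {E₀ E₁ : Type*} [AddCommGroup E₀] [Module ℝ E₀] [AddCommGroup E₁] [Module ℝ E₁]
    [FiniteDimensional ℝ E₀] [FiniteDimensional ℝ E₁]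
    (V₀ : Submodule ℝ E₀) (V₁ : Submodule ℝ E₁) (B : E₁ →ₗ[ℝ] E₀ →ₗ[ℝ] ℝ)
    (hnd : ∀ X₀ ∈ V₀, (∀ X₁ ∈ V₁, B X₁ X₀ = 0) → X₀ = 0) :
    finrank ℝ V₀ ≤ finrank ℝ V₁ := by
  set φ : V₀ →ₗ[ℝ] Module.Dual ℝ V₁ :=
    (V₁.subtype.dualMap.comp B.flip).domRestrict V₀ with hφ
  have hinj : Function.Injective φ := by
    rw [← LinearMap.ker_eq_bot, LinearMap.ker_eq_bot']
    rintro ⟨X₀, h₀⟩ h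
    ext
    refine hnd X₀ h₀ fun X₁ h₁ => ?_
    have := congrFun (congrArg DFunLike.coe h) ⟨X₁, h₁⟩
    simpa [hφ] using this
  calc finrank ℝ V₀ ≤ finrank ℝ (Module.Dual ℝ V₁) :=
        LinearMap.finrank_le_finrank_of_injective hinj
    _ = finrank ℝ V₁ := Subspace.dual_finrank_eq

lemma aux_isCompl {E₀ E₁ : Type*} [AddCommGroup E₀] [Module ℝ E₀] [AddCommGroup E₁] [Module ℝ E₁]
    [FiniteDimensional ℝ E₀] [FiniteDimensional ℝ E₁]
    (V₀ : Submodule ℝ E₀) (V₁ : Submodule ℝ E₁) (W : Submodule ℝ E₁)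
    (B : E₁ →ₗ[ℝ] E₀ →ₗ[ℝ] ℝ)
    (hdim : finrank ℝ V₀ = finrank ℝ V₁)
    (hnd : ∀ X₀ ∈ V₀, (∀ X₁ ∈ V₁, B X₁ X₀ = 0) → X₀ = 0)
    (hker₁ : ∀ X₁ ∈ W, ∀ X₀ ∈ V₀, B X₁ X₀ = 0)
    (hker₂ : ∀ X₁ : E₁, (∀ X₀ ∈ V₀, B X₁ X₀ = 0) → X₁ ∈ W) :
    IsCompl V₁ W := by
  set φ : V₀ →ₗ[ℝ] Module.Dual ℝ V₁ :=
    (V₁.subtype.dualMap.comp B.flip).domRestrict V₀ with hφ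
  have hinj : Function.Injective φ := by
    rw [← LinearMap.ker_eq_bot, LinearMap.ker_eq_bot']
    rintro ⟨X₀, h₀⟩ h
    ext
    refine hnd X₀ h₀ fun X₁ h₁ => ?_
    have := congrFun (congrArg DFunLike.coe h) ⟨X₁, h₁⟩
    simpa [hφ] using this
  have hsurj : Function.Surjective φ := by
    have h1 : finrank ℝ V₀ = finrank ℝ (Module.Dual ℝ V₁) := by
      rw [Subspace.dual_finrank_eq]; exact hdim
    exact (LinearMap.injective_iff_surjective_of_finrank_eq_finrank h1).mp hinj
  have hdisj : Disjoint V₁ W := by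
    rw [Submodule.disjoint_def]
    intro x hx1 hxW
    have hzero : ∀ ψ : Module.Dual ℝ V₁, ψ ⟨x, hx1⟩ = 0 := by
      intro ψ
      obtain ⟨X₀, rfl⟩ := hsurj ψ
      simpa [hφ] using hker₁ x hxW X₀.1 X₀.2
    have := (Module.forall_dual_apply_eq_zero_iff ℝ (⟨x, hx1⟩ : V₁)).mp hzero
    simpa using congrArg Subtype.val this
  -- codisjoint
  set Ψ : E₁ →ₗ[ℝ] Module.Dual ℝ V₀ := V₀.subtype.dualMap.comp B with hΨ
  have hkerΨ : LinearMap.ker Ψ ≤ W := by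
    intro x hx
    refine hker₂ x fun X₀ h₀ => ?_
    have := congrFun (congrArg DFunLike.coe (LinearMap.mem_ker.mp hx)) ⟨X₀, h₀⟩
    simpa [hΨ] using this
  have a1 : finrank ℝ (LinearMap.range Ψ) + finrank ℝ (LinearMap.ker Ψ) = finrank ℝ E₁ :=
    LinearMap.finrank_range_add_finrank_ker Ψ
  have a2 : finrank ℝ (LinearMap.range Ψ) ≤ finrank ℝ V₀ := by
    calc finrank ℝ (LinearMap.range Ψ) ≤ finrank ℝ (Module.Dual ℝ V₀) := Submodule.finrank_le _
      _ = finrank ℝ V₀ := Subspace.dual_finrank_eq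
  have a3 : finrank ℝ (LinearMap.ker Ψ) ≤ finrank ℝ W := Submodule.finrank_mono hkerΨ
  have a4 : finrank ℝ ↑(V₁ ⊔ W) + finrank ℝ ↑(V₁ ⊓ W) = finrank ℝ V₁ + finrank ℝ W :=
    Submodule.finrank_sup_add_finrank_inf_eq V₁ W
  have a5 : V₁ ⊓ W = ⊥ := hdisj.eq_bot
  rw [a5, finrank_bot] at a4
  have a6 : finrank ℝ ↑(V₁ ⊔ W) ≤ finrank ℝ E₁ := Submodule.finrank_le _
  refine ⟨hdisj, codisjoint_iff.mpr (Submodule.eq_top_of_finrank_eq ?_)⟩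
  omega

section
variable {EQ : Type*} [NormedAddCommGroup EQ] [NormedSpace ℝ EQ]
  {HQ : Type*} [TopologicalSpace HQ] (IQ : ModelWithCorners ℝ EQ HQ)
  {Q : Type*} [TopologicalSpace Q] [ChartedSpace HQ Q] [IsManifold IQ (⊤ : ℕ∞) Q]

omit [IsManifold IQ (⊤ : ℕ∞) Q] in
lemma aux_mfderiv_clm_comp {F F' : Type*} [NormedAddCommGroup F] [NormedSpace ℝ F]
    [NormedAddCommGroup F'] [NormedSpace ℝ F'] (c : F →L[ℝ] F') (D : Q → F) (b : Q)
    (hD : MDifferentiableAt IQ 𝓘(ℝ, F) D b) :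
    mfderiv IQ 𝓘(ℝ, F') (fun y => c (D y)) b
      = c.comp (mfderiv IQ 𝓘(ℝ, F) D b) := by
  have h := mfderiv_comp (I' := 𝓘(ℝ, F)) b c.mdifferentiableAt hD
  rw [c.mfderiv_eq] at h
  exact h

/-- first-slot derivative of `L`, as a map into a fixed space of linear functionals -/
noncomputable def D1 (L : Q × Q → ℝ) (a : Q) : Q → (EQ →L[ℝ] ℝ) :=
  fun y => mfderiv IQ 𝓘(ℝ, ℝ) (fun x => L (x, y)) a

/-- mixed second derivative of `L` -/
noncomputable def T2 (L : Q × Q → ℝ) (a b : Q) :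
    TangentSpace IQ b →L[ℝ] (EQ →L[ℝ] ℝ) :=
  mfderiv IQ 𝓘(ℝ, EQ →L[ℝ] ℝ) (D1 IQ L a) b

instance tangentSpaceFiniteDimensional {EQ : Type*} [NormedAddCommGroup EQ] [NormedSpace ℝ EQ]
    [FiniteDimensional ℝ EQ] {HQ : Type*} [TopologicalSpace HQ] {IQ : ModelWithCorners ℝ EQ HQ}
    {Q : Type*} [TopologicalSpace Q] [ChartedSpace HQ Q] (x : Q) :
    FiniteDimensional ℝ (TangentSpace IQ x) := inferInstanceAs (FiniteDimensional ℝ EQ)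

lemma aux_D1_smooth (L : Q × Q → ℝ) (hL : ContMDiff (IQ.prod IQ) 𝓘(ℝ, ℝ) (⊤ : ℕ∞) L) (a : Q) :
    ContMDiff IQ 𝓘(ℝ, EQ →L[ℝ] ℝ) (⊤ : ℕ∞) (D1 IQ L a) := by
  intro y₀
  have hf : ContMDiffAt (IQ.prod IQ) 𝓘(ℝ, ℝ) (⊤ : ℕ∞)
      (Function.uncurry (fun (y x : Q) => L (x, y))) (y₀, a) :=
    (hL.comp (ContMDiff.prodMk contMDiff_snd contMDiff_fst)).contMDiffAt
  have h := hf.mfderiv (m := (⊤ : ℕ∞)) (fun y x => L (x, y)) (fun _ => a) contMDiffAt_const (by exact_mod_cast le_top)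
  have key : inTangentCoordinates IQ 𝓘(ℝ, ℝ) (fun _ => a) (fun y => L (a, y))
      (fun y => mfderiv IQ 𝓘(ℝ, ℝ) (fun x => L (x, y)) a) y₀
      = fun y => mfderiv IQ 𝓘(ℝ, ℝ) (fun x => L (x, y)) a := by
    funext y
    erw [inTangentCoordinates_eq]
    · have h1 : (tangentBundleCore IQ Q).coordChange (achart HQ a) (achart HQ a) a
          = ContinuousLinearMap.id ℝ EQ := by
        ext v
        exact (tangentBundleCore IQ Q).coordChange_self (achart HQ a) a
          (mem_chart_source HQ a) v
      rw [h1, tangentBundleCore_coordChange_model_space]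
      simp
      exact ContinuousLinearMap.comp_id _
    · exact mem_chart_source HQ a
    · simp [chartAt_self_eq]
  rw [key] at h
  exact h

lemma aux_BT (L : Q × Q → ℝ) (hL : ContMDiff (IQ.prod IQ) 𝓘(ℝ, ℝ) (⊤ : ℕ∞) L) (a b : Q)
    (X₀ : TangentSpace IQ a) (X₁ : TangentSpace IQ b) :
    mfderiv IQ 𝓘(ℝ, ℝ) (fun y => mfderiv IQ 𝓘(ℝ, ℝ) (fun x => L (x, y)) a X₀) b X₁
      = T2 IQ L a b X₁ X₀ := by
  have h := aux_mfderiv_clm_comp IQ (ContinuousLinearMap.apply ℝ ℝ (show EQ from X₀))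
    (D1 IQ L a) b ((aux_D1_smooth IQ L hL a b).mdifferentiableAt (by simp))
  have h2 := congrFun (congrArg DFunLike.coe h) X₁
  exact h2
/-- mixed second derivative of `L`, as a bilinear map -/
noncomputable def bilT (L : Q × Q → ℝ) (a b : Q) :
    TangentSpace IQ b →ₗ[ℝ] TangentSpace IQ a →ₗ[ℝ] ℝ :=
  LinearMap.mk₂ ℝ (fun X₁ X₀ => T2 IQ L a b X₁ X₀)
    (by intro x y z; rw [map_add]; rfl) (by intro c x y; rw [map_smul]; rfl)
    (by intro x y z; exact map_add _ _ _) (by intro c x y; exact map_smul _ _ _)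

@[simp] lemma bilT_apply (L : Q × Q → ℝ) (a b : Q) (X₁ : TangentSpace IQ b)
    (X₀ : TangentSpace IQ a) : bilT IQ L a b X₁ X₀ = T2 IQ L a b X₁ X₀ := rfl

end

section AuxU
variable {EG : Type*} [NormedAddCommGroup EG] [NormedSpace ℝ EG]
  {EQ : Type*} [NormedAddCommGroup EQ] [NormedSpace ℝ EQ]

/-- minus precomposition with `A` -/
noncomputable def uMap (A : EG →L[ℝ] EQ) : (EQ →L[ℝ] ℝ) →L[ℝ] (EG →L[ℝ] ℝ) :=
  -((ContinuousLinearMap.compL ℝ EG EQ ℝ).flip A)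

@[simp] lemma uMap_apply (A : EG →L[ℝ] EQ) (M : EQ →L[ℝ] ℝ) (ξ : EG) :
    uMap A M ξ = -(M (A ξ)) := by
  simp [uMap]
end AuxU

lemma aux_equivariant
    {EG : Type*} [NormedAddCommGroup EG] [NormedSpace ℝ EG]
    {HG : Type*} [TopologicalSpace HG] (IG : ModelWithCorners ℝ EG HG)
    {G : Type*} [TopologicalSpace G] [ChartedSpace HG G] [Group G] [LieGroup IG (⊤ : ℕ∞) G]
    {EQ : Type*} [NormedAddCommGroup EQ] [NormedSpace ℝ EQ]
    {HQ : Type*} [TopologicalSpace HQ] (IQ : ModelWithCorners ℝ EQ HQ)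
    {Q : Type*} [TopologicalSpace Q] [ChartedSpace HQ Q] [IsManifold IQ (⊤ : ℕ∞) Q]
    [MulAction G Q]
    (hact : ContMDiff (IG.prod IQ) IQ (⊤ : ℕ∞) (fun p : G × Q => p.1 • p.2))
    (L : Q × Q → ℝ) (hL : ContMDiff (IQ.prod IQ) 𝓘(ℝ, ℝ) (⊤ : ℕ∞) L)
    (hinv : ∀ (g : G) (q₀ q₁ : Q), L (g • q₀, g • q₁) = L (q₀, q₁))
    (Jd : Q × Q → (EG →L[ℝ] ℝ))
    (hJd : ∀ (p : Q × Q) (ξ : TangentSpace IG (1 : G)),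
      Jd p ξ = -(mfderiv IQ 𝓘(ℝ, ℝ) (fun x => L (x, p.2)) p.1
        ((mfderiv IG IQ (fun h : G => h • p.1) (1 : G)) ξ)))
    (μ : EG →L[ℝ] ℝ)
    (hAdμ : ∀ (g : G) (ξ : TangentSpace IG (1 : G)),
      μ ((mfderiv IG IG (fun x : G => g * x * g⁻¹) (1 : G)) ξ) = μ ξ)
    (g : G) (q₀ q₁ : Q) (hp : Jd (q₀, q₁) = μ) :
    Jd (g • q₀, g • q₁) = μ := by
  have hsmulC : ContMDiff IQ IQ (⊤ : ℕ∞) (fun x : Q => g • x) :=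
    hact.comp (contMDiff_const.prodMk contMDiff_id)
  have horb : ∀ q : Q, ContMDiff IG IQ (⊤ : ℕ∞) (fun h : G => h • q) := fun q =>
    hact.comp (contMDiff_id.prodMk contMDiff_const)
  have hconj : ContMDiff IG IG (⊤ : ℕ∞) (fun x : G => g⁻¹ * x * g) :=
    (contMDiff_const.mul contMDiff_id).mul contMDiff_const
  have e1 : (fun x : G => g⁻¹ * x * g) 1 = 1 := by group
  have e2 : ((fun h : G => h • q₀) ∘ (fun x : G => g⁻¹ * x * g)) 1 = q₀ := by
    simp only [Function.comp_apply]
    rw [show g⁻¹ * (1 : G) * g = 1 by group, one_smul]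
  have hfun : (fun h : G => h • (g • q₀))
      = (fun x : Q => g • x) ∘ ((fun h : G => h • q₀) ∘ (fun x : G => g⁻¹ * x * g)) := by
    funext h
    simp only [Function.comp_apply]
    rw [← mul_smul, ← mul_smul]
    congr 1
    group
  have md_orb : MDifferentiableAt IG IQ (fun h : G => h • q₀) ((fun x : G => g⁻¹ * x * g) 1) := by
    rw [e1]; exact (horb q₀).mdifferentiableAt (by simp)
  have md_conj : MDifferentiableAt IG IG (fun x : G => g⁻¹ * x * g) 1 :=
    hconj.mdifferentiableAt (by simp)
  have hc1 := mfderiv_comp (I' := IG) (1 : G) md_orb md_conj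
  rw [show g⁻¹ * (1 : G) * g = 1 by group] at hc1
  have md_oc : MDifferentiableAt IG IQ ((fun h : G => h • q₀) ∘ (fun x : G => g⁻¹ * x * g)) 1 :=
    ((horb q₀).comp hconj).mdifferentiableAt (by simp)
  have md_smul : MDifferentiableAt IQ IQ (fun x : Q => g • x)
      (((fun h : G => h • q₀) ∘ (fun x : G => g⁻¹ * x * g)) 1) := by
    rw [e2]; exact hsmulC.mdifferentiableAt (by simp)
  have hc2 := mfderiv_comp (I' := IQ) (1 : G) md_smul md_oc
  rw [e2, hc1] at hc2
  rw [← hfun] at hc2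
  -- hc2 : mfderiv IG IQ (fun h => h • (g • q₀)) 1
  --   = (mfderiv IQ IQ (g • ·) q₀).comp ((mfderiv IG IQ (orb q₀) 1).comp (mfderiv IG IG conj 1))
  have hLfun : (fun x : Q => L (x, q₁)) = (fun x : Q => L (x, g • q₁)) ∘ (fun x : Q => g • x) :=
    funext fun x => (hinv g x q₁).symm
  have mdL : MDifferentiableAt IQ 𝓘(ℝ, ℝ) (fun x : Q => L (x, g • q₁))
      ((fun x : Q => g • x) q₀) :=
    ((hL.comp (contMDiff_id.prodMk contMDiff_const)).mdifferentiableAt (by simp))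
  have hcL := mfderiv_comp (I' := IQ) q₀ mdL (hsmulC.mdifferentiableAt (by simp))
  rw [← hLfun] at hcL
  -- now assemble
  apply ContinuousLinearMap.ext
  intro ξ
  have hJ1 := hJd (g • q₀, g • q₁) ξ
  have hJ0 := hJd (q₀, q₁) ((mfderiv IG IG (fun x : G => g⁻¹ * x * g) 1) ξ)
  rw [hp] at hJ0
  rw [hJ1, hc2]
  have hpt : ∀ v : TangentSpace IQ q₀,
      mfderiv IQ 𝓘(ℝ, ℝ) (fun x : Q => L (x, g • q₁)) (g • q₀)
        ((mfderiv IQ IQ (fun x : Q => g • x) q₀) v)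
      = mfderiv IQ 𝓘(ℝ, ℝ) (fun x : Q => L (x, q₁)) q₀ v := by
    intro v
    rw [hcL]
    rfl
  have hA' := hAdμ g⁻¹ ξ
  rw [show (fun x : G => g⁻¹ * x * g⁻¹⁻¹) = (fun x : G => g⁻¹ * x * g) from
    funext fun x => by rw [inv_inv]] at hA'
  have final : -(mfderiv IQ 𝓘(ℝ, ℝ) (fun x : Q => L (x, g • q₁)) (g • q₀)
      ((mfderiv IQ IQ (fun x : Q => g • x) q₀)
        ((mfderiv IG IQ (fun h : G => h • q₀) 1)
          ((mfderiv IG IG (fun x : G => g⁻¹ * x * g) 1) ξ)))) = μ ξ := by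
    exact (congrArg (fun t : ℝ => -t) (hpt _)).trans (hJ0.symm.trans hA')
  exact final

theorem momentum_level_set_affine_discrete_connection
    {EG : Type*} [NormedAddCommGroup EG] [NormedSpace ℝ EG]
    [FiniteDimensional ℝ EG]
    {HG : Type*} [TopologicalSpace HG] (IG : ModelWithCorners ℝ EG HG)
    {G : Type*} [TopologicalSpace G] [ChartedSpace HG G] [Group G]
    [LieGroup IG (⊤ : ℕ∞) G]
    {EQ : Type*} [NormedAddCommGroup EQ] [NormedSpace ℝ EQ]
    [FiniteDimensional ℝ EQ]
    {HQ : Type*} [TopologicalSpace HQ] (IQ : ModelWithCorners ℝ EQ HQ)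
    {Q : Type*} [TopologicalSpace Q] [ChartedSpace HQ Q]
    [IsManifold IQ (⊤ : ℕ∞) Q]
    [MulAction G Q]
    (hact : ContMDiff (IG.prod IQ) IQ (⊤ : ℕ∞) (fun p : G × Q => p.1 • p.2))
    (L : Q × Q → ℝ)
    (hL : ContMDiff (IQ.prod IQ) 𝓘(ℝ, ℝ) (⊤ : ℕ∞) L)
    (hinv : ∀ (g : G) (q₀ q₁ : Q), L (g • q₀, g • q₁) = L (q₀, q₁))
    (hreg : ∀ (q₀ q₁ : Q) (X₀ : TangentSpace IQ q₀),
      (∀ X₁ : TangentSpace IQ q₁,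
        mfderiv IQ 𝓘(ℝ, ℝ)
          (fun y => mfderiv IQ 𝓘(ℝ, ℝ) (fun x => L (x, y)) q₀ X₀) q₁ X₁ = (0 : ℝ))
      → X₀ = 0)
    (hGreg : ∀ (q₀ q₁ : Q) (X₀ : TangentSpace IQ q₀),
      X₀ ∈ LinearMap.range (ContinuousLinearMap.toLinearMap
        (mfderiv IG IQ (fun h : G => h • q₀) (1 : G))) →
      (∀ X₁ ∈ LinearMap.range (ContinuousLinearMap.toLinearMap
        (mfderiv IG IQ (fun h : G => h • q₁) (1 : G))),
        mfderiv IQ 𝓘(ℝ, ℝ)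
          (fun y => mfderiv IQ 𝓘(ℝ, ℝ) (fun x => L (x, y)) q₀ X₀) q₁ X₁ = (0 : ℝ))
      → X₀ = 0)
    (Jd : Q × Q → (EG →L[ℝ] ℝ))
    (hJd : ∀ (p : Q × Q) (ξ : TangentSpace IG (1 : G)),
      Jd p ξ = -(mfderiv IQ 𝓘(ℝ, ℝ) (fun x => L (x, p.2)) p.1
        ((mfderiv IG IQ (fun h : G => h • p.1) (1 : G)) ξ)))
    (μ : EG →L[ℝ] ℝ)
    -- Ad*-invariance of μ: μ ∘ Ad_g = μ for all g
    (hAdμ : ∀ (g : G) (ξ : TangentSpace IG (1 : G)),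
      μ ((mfderiv IG IG (fun x : G => g * x * g⁻¹) (1 : G)) ξ) = μ ξ)
    -- μ-goodness: γ q is the unique g with J_d(q, g·q) = μ
    (γ : Q → G)
    (hγ : ∀ q : Q, Jd (q, γ q • q) = μ)
    (hγuniq : ∀ (q : Q) (g : G), Jd (q, g • q) = μ → g = γ q) :
    -- 𝒥_μ is G-invariant
    (∀ (g : G) (p : Q × Q), Jd p = μ → Jd (g • p.1, g • p.2) = μ)
    -- the graph of the level lies in 𝒥_μ
    ∧ (∀ q : Q, Jd (q, γ q • q) = μ)
    -- the level is G-equivariant for the conjugation action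
    ∧ (∀ (g : G) (q : Q), γ (g • q) = g * γ q * g⁻¹)
    -- transversality of the fibers of 𝒥_μ to the orbits
    ∧ (∀ q₀ q₁ : Q, q₁ ∈ MulAction.orbit G q₀ → Jd (q₀, q₁) = μ →
        IsCompl
          (LinearMap.range (ContinuousLinearMap.toLinearMap
            (mfderiv IG IQ (fun h : G => h • q₁) (1 : G))))
          (LinearMap.ker
            (ContinuousLinearMap.toLinearMap
              (mfderiv IQ 𝓘(ℝ, EG →L[ℝ] ℝ) (fun y => Jd (q₀, y)) q₁)))) := by
  have part1 : ∀ (g : G) (p : Q × Q), Jd p = μ → Jd (g • p.1, g • p.2) = μ := by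
    intro g p hp
    exact aux_equivariant IG IQ hact L hL hinv Jd hJd μ hAdμ g p.1 p.2 hp
  have part3 : ∀ (g : G) (q : Q), γ (g • q) = g * γ q * g⁻¹ := by
    intro g q
    refine (hγuniq (g • q) (g * γ q * g⁻¹) ?_).symm
    have hq : (g * γ q * g⁻¹) • (g • q) = g • (γ q • q) := by
      rw [smul_smul, smul_smul, inv_mul_cancel_right]
    rw [hq]
    exact part1 g (q, γ q • q) (hγ q)
  refine ⟨part1, hγ, part3, ?_⟩
  intro q₀ q₁ _horbit _hJμ
  have hnd : ∀ a b : Q, ∀ X₀ ∈ LinearMap.range (ContinuousLinearMap.toLinearMap (mfderiv IG IQ (fun h : G => h • a) (1 : G))),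
      (∀ X₁ ∈ LinearMap.range (ContinuousLinearMap.toLinearMap (mfderiv IG IQ (fun h : G => h • b) (1 : G))),
        bilT IQ L a b X₁ X₀ = 0) → X₀ = 0 := by
    intro a b X₀ h₀ h
    refine hGreg a b X₀ h₀ fun X₁ h₁ => ?_
    rw [aux_BT IQ L hL a b X₀ X₁]
    exact h X₁ h₁
  have hdim : finrank ℝ (LinearMap.range (ContinuousLinearMap.toLinearMap (mfderiv IG IQ (fun h : G => h • q₀) (1 : G))))
      = finrank ℝ (LinearMap.range (ContinuousLinearMap.toLinearMap (mfderiv IG IQ (fun h : G => h • q₁) (1 : G)))) :=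
    le_antisymm
      (aux_dim_le _ _ (bilT IQ L q₀ q₁) (hnd q₀ q₁))
      (aux_dim_le _ _ (bilT IQ L q₁ q₀) (hnd q₁ q₀))
  have hJdD1 : (fun y => Jd (q₀, y))
      = fun y => uMap (show EG →L[ℝ] EQ from mfderiv IG IQ (fun h : G => h • q₀) (1 : G))
          (D1 IQ L q₀ y) := by
    funext y
    apply ContinuousLinearMap.ext
    intro ξ
    rw [hJd (q₀, y) ξ]
    simp only [uMap_apply, neg_inj, D1]
    rfl
  have hfeq : mfderiv IQ 𝓘(ℝ, EG →L[ℝ] ℝ) (fun y => Jd (q₀, y)) q₁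
      = (uMap (show EG →L[ℝ] EQ from mfderiv IG IQ (fun h : G => h • q₀) (1 : G))).comp
          (T2 IQ L q₀ q₁) := by
    rw [hJdD1]
    exact aux_mfderiv_clm_comp IQ _ (D1 IQ L q₀) q₁
      ((aux_D1_smooth IQ L hL q₀ q₁).mdifferentiableAt (by simp))
  rw [hfeq]
  refine aux_isCompl _ _ _ (bilT IQ L q₀ q₁) hdim (hnd q₀ q₁) ?_ ?_
  · intro X₁ hX₁ X₀ h₀
    obtain ⟨ξ, rfl⟩ := h₀
    have h0 : (uMap (show EG →L[ℝ] EQ from mfderiv IG IQ (fun h : G => h • q₀) (1 : G))).comp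
        (T2 IQ L q₀ q₁) X₁ = 0 := LinearMap.mem_ker.mp hX₁
    have h1 : -(T2 IQ L q₀ q₁ X₁ ((mfderiv IG IQ (fun h : G => h • q₀) (1 : G)) ξ)) = (0 : ℝ) :=
      congrFun (congrArg DFunLike.coe h0) ξ
    show T2 IQ L q₀ q₁ X₁ ((mfderiv IG IQ (fun h : G => h • q₀) (1 : G)) ξ) = 0
    exact neg_eq_zero.mp h1
  · intro X₁ h
    rw [LinearMap.mem_ker]
    apply ContinuousLinearMap.ext
    intro ξ
    have h2 := h ((mfderiv IG IQ (fun h : G => h • q₀) (1 : G)) ξ) ⟨ξ, rfl⟩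
    have h3 : T2 IQ L q₀ q₁ X₁ ((mfderiv IG IQ (fun h : G => h • q₀) (1 : G)) ξ) = 0 := h2
    show -(T2 IQ L q₀ q₁ X₁ ((mfderiv IG IQ (fun h : G => h • q₀) (1 : G)) ξ)) = (0 : ℝ)
    rw [neg_eq_zero]
    exact h3
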